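/- Fix c ∈ (0,1), α > 0 and β > −1, and for integers k ≥ 0 and n ≥ 1 define p_k(x;n) = (−1)^k c^{−k/(2n)} J_{2nα+β}(x c^{−k/(2n)}; c^{1/n}), where J denotes the Hahn–Exton q-Bessel function with base q = c^{1/n}. Then there exists a constant C > 0 such that |p_{k−1}(x;n)| · dist(x,ℝ) ≤ C · |p_k(x;n)| for all integers k, n ≥ 1 and all x ∈ ℂ∖ℝ. -/

import Mathlib

open Complex Filter

noncomputable def qPoch (q a : ℂ) (k : ℕ) : ℂ := ∏ i ∈ Finset.range k, (1 - a * q ^ i)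

noncomputable def qPochInf (q a : ℂ) : ℂ := ∏' i : ℕ, (1 - a * q ^ i)

noncomputable def Jser (q : ℝ) (ν z : ℂ) : ℂ :=
  z ^ ν * (qPochInf (q : ℂ) ((q : ℂ) ^ (ν + 1)) / qPochInf (q : ℂ) (q : ℂ)) *
    ∑' k : ℕ, ((-1 : ℂ) ^ k * (q : ℂ) ^ (k * (k + 1) / 2) * z ^ (2 * k)) /
      (qPoch (q : ℂ) (q : ℂ) k * qPoch (q : ℂ) ((q : ℂ) ^ (ν + 1)) k)

open scoped Classical in
noncomputable def JHE (q : ℝ) (ν z : ℂ) : ℂ :=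
  if h : ∃ n : ℕ, ν = -((n : ℂ) + 1) then
    let n : ℕ := h.choose + 1
    (-1 : ℂ) ^ n * (q : ℂ) ^ ((n : ℂ) / 2) * Jser q (n : ℂ) (z * (q : ℂ) ^ ((n : ℂ) / 2))
  else Jser q ν z

/-- p_k(x;n) = (−1)^k c^{−k/2n} J_{2nα+β}(x c^{−k/2n}; c^{1/n}). -/
noncomputable def pHE (c α β : ℝ) (k n : ℕ) (x : ℂ) : ℂ :=
  (-1 : ℂ) ^ k * (c : ℂ) ^ (-(k : ℂ) / (2 * (n : ℂ))) *
    JHE (c ^ ((1 : ℝ) / (n : ℝ))) ((2 * (n : ℝ) * α + β : ℝ) : ℂ)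
      (x * (c : ℂ) ^ (-(k : ℂ) / (2 * (n : ℂ))))


namespace Complex

noncomputable def abs : AbsoluteValue ℂ ℝ where
  toFun := fun z => ‖z‖
  map_mul' := norm_mul
  nonneg' := norm_nonneg
  eq_zero' := fun _ => norm_eq_zero
  add_le' := norm_add_le

theorem norm_eq_abs (z : ℂ) : ‖z‖ = abs z := rfl

theorem abs_ofReal (r : ℝ) : abs (r : ℂ) = |r| := Complex.norm_real r

theorem abs_conj (z : ℂ) : abs ((starRingEnd ℂ) z) = abs z := Complex.norm_conj z

theorem abs_im_le_abs (z : ℂ) : |z.im| ≤ abs z := Complex.abs_im_le_norm z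

theorem normSq_eq_abs (z : ℂ) : normSq z = abs z ^ 2 := Complex.normSq_eq_norm_sq z

theorem abs_cpow_real (z : ℂ) (y : ℝ) : abs (z ^ (y : ℂ)) = abs z ^ y := norm_cpow_real z y

theorem abs_zpow (z : ℂ) (n : ℤ) : abs (z ^ n) = abs z ^ n := Complex.norm_zpow z n

end Complex

namespace HE

variable {q ν : ℝ}

noncomputable def aa (q ν : ℝ) (m : ℕ) : ℝ :=
  (-1 : ℝ) ^ m * q ^ (m * (m + 1) / 2) /
    ((∏ i ∈ Finset.range m, (1 - q * q ^ i)) * (∏ i ∈ Finset.range m, (1 - q ^ (ν + 1) * q ^ i)))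

lemma one_sub_pos1 (hq0 : 0 < q) (hq1 : q < 1) (i : ℕ) : 0 < 1 - q * q ^ i := by
  have h1 : q ^ i ≤ 1 := pow_le_one₀ hq0.le hq1.le
  nlinarith [pow_pos hq0 i]

lemma rpow_nu_lt_one (hq0 : 0 < q) (hq1 : q < 1) (hν : -1 < ν) : q ^ (ν + 1) < 1 :=
  Real.rpow_lt_one hq0.le hq1 (by linarith)

lemma rpow_nu_pos (hq0 : 0 < q) : (0:ℝ) < q ^ (ν + 1) := Real.rpow_pos_of_pos hq0 _

lemma one_sub_pos2 (hq0 : 0 < q) (hq1 : q < 1) (hν : -1 < ν) (i : ℕ) :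
    0 < 1 - q ^ (ν + 1) * q ^ i := by
  have h1 : q ^ i ≤ 1 := pow_le_one₀ hq0.le hq1.le
  have h2 := rpow_nu_lt_one hq0 hq1 hν
  have h3 := rpow_nu_pos (ν := ν) hq0
  nlinarith [pow_pos hq0 i]

lemma prod1_pos (hq0 : 0 < q) (hq1 : q < 1) (m : ℕ) :
    0 < ∏ i ∈ Finset.range m, (1 - q * q ^ i) :=
  Finset.prod_pos (fun i _ => one_sub_pos1 hq0 hq1 i)

lemma prod2_pos (hq0 : 0 < q) (hq1 : q < 1) (hν : -1 < ν) (m : ℕ) :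
    0 < ∏ i ∈ Finset.range m, (1 - q ^ (ν + 1) * q ^ i) :=
  Finset.prod_pos (fun i _ => one_sub_pos2 hq0 hq1 hν i)

lemma aa_zero : aa q ν 0 = 1 := by simp [aa]

lemma tri_succ (m : ℕ) : (m + 1) * (m + 1 + 1) / 2 = m * (m + 1) / 2 + (m + 1) := by
  have h : (m + 1) * (m + 1 + 1) = m * (m + 1) + 2 * (m + 1) := by ring
  rw [h, Nat.add_mul_div_left _ _ (by norm_num : 0 < 2)]

/-- KEY ratio identity. -/
lemma aa_key (hq0 : 0 < q) (hq1 : q < 1) (hν : -1 < ν) (m : ℕ) :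
    aa q ν (m + 1) * ((1 - q ^ (m + 1)) * (1 - q ^ (ν + 1) * q ^ m)) = -(q ^ (m + 1)) * aa q ν m := by
  have h1 := (one_sub_pos1 hq0 hq1 m).ne'
  have h2 := (one_sub_pos2 hq0 hq1 hν m).ne'
  have hP1 := (prod1_pos hq0 hq1 m).ne'
  have hP2 := (prod2_pos hq0 hq1 hν m).ne'
  have h1' : (1 : ℝ) - q ^ (m+1) ≠ 0 := by rw [pow_succ']; exact h1
  unfold aa
  rw [Finset.prod_range_succ, Finset.prod_range_succ, tri_succ, pow_add,
    show q * q ^ m = q ^ (m + 1) from (pow_succ' q m).symm,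
    div_mul_eq_mul_div, mul_div_assoc', div_eq_div_iff
      (by exact mul_ne_zero (mul_ne_zero hP1 h1') (mul_ne_zero hP2 h2))
      (mul_ne_zero hP1 hP2)]
  ring

lemma abs_aa_succ (hq0 : 0 < q) (hq1 : q < 1) (hν : -1 < ν) (m : ℕ) :
    |aa q ν (m + 1)| * ((1 - q ^ (m + 1)) * (1 - q ^ (ν + 1) * q ^ m)) = q ^ (m + 1) * |aa q ν m| := by
  have h1 := one_sub_pos1 hq0 hq1 (i := m)
  have h2 := one_sub_pos2 hq0 hq1 hν (i := m)
  have h1' : (0:ℝ) < 1 - q ^ (m+1) := by rw [pow_succ']; exact h1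
  have h := congrArg (fun t : ℝ => |t|) (aa_key hq0 hq1 hν m)
  simp only [abs_mul, abs_neg] at h
  rw [_root_.abs_of_pos h1', _root_.abs_of_pos h2, _root_.abs_of_pos (pow_pos hq0 (m+1))] at h
  exact h

/-- Summability of |aa m| * s^m for s ≥ 0. -/
lemma summable_abs_aa (hq0 : 0 < q) (hq1 : q < 1) (hν : -1 < ν) (s : ℝ) (hs : 0 ≤ s) :
    Summable (fun m : ℕ => |aa q ν m| * s ^ m) := by
  apply summable_of_ratio_norm_eventually_le (r := 1/2) (by norm_num)
  have hq' : Tendsto (fun m : ℕ => q ^ m) atTop (nhds 0) :=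
    tendsto_pow_atTop_nhds_zero_of_lt_one hq0.le hq1
  have hqs : Tendsto (fun m : ℕ => q ^ (m+1)) atTop (nhds 0) := by
    have h := hq'.const_mul q
    simp only [mul_zero] at h
    exact h.congr (fun m => by rw [← pow_succ'])
  have e1 : ∀ᶠ m : ℕ in atTop, q ^ (m+1) < 1/2 :=
    hqs.eventually (eventually_lt_nhds (by norm_num : (0:ℝ) < 1/2))
  have e2 : ∀ᶠ m : ℕ in atTop, q ^ (ν+1) * q ^ m < 1/2 := by
    have ht : Tendsto (fun m : ℕ => q ^ (ν+1) * q ^ m) atTop (nhds 0) := by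
      have h := hq'.const_mul (q ^ (ν+1))
      simpa using h
    exact ht.eventually (eventually_lt_nhds (by norm_num : (0:ℝ) < 1/2))
  have e3 : ∀ᶠ m : ℕ in atTop, q ^ (m+1) * s < 1/8 := by
    have ht : Tendsto (fun m : ℕ => q ^ (m+1) * s) atTop (nhds 0) := by
      have h := hqs.mul_const s
      simpa using h
    exact ht.eventually (eventually_lt_nhds (by norm_num : (0:ℝ) < 1/8))
  filter_upwards [e1, e2, e3] with m h1 h2 h3
  have hd1 : (0:ℝ) < 1 - q ^ (m+1) := by linarith
  have hd2 : (0:ℝ) < 1 - q ^ (ν+1) * q ^ m := one_sub_pos2 hq0 hq1 hν m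
  have key := abs_aa_succ hq0 hq1 hν m
  rw [Real.norm_eq_abs, Real.norm_eq_abs,
    _root_.abs_of_nonneg (by positivity : (0:ℝ) ≤ |aa q ν (m+1)| * s ^ (m+1)),
    _root_.abs_of_nonneg (by positivity : (0:ℝ) ≤ |aa q ν m| * s ^ m)]
  have hden : (1:ℝ)/4 ≤ (1 - q ^ (m+1)) * (1 - q ^ (ν+1) * q ^ m) := by nlinarith
  have hA4 : |aa q ν (m+1)| ≤ 4 * (q ^ (m+1) * |aa q ν m|) := by
    nlinarith [key, hden, abs_nonneg (aa q ν (m+1)),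
      mul_nonneg (abs_nonneg (aa q ν (m+1))) (by linarith : (0:ℝ) ≤ (1 - q ^ (m+1)) * (1 - q ^ (ν+1) * q ^ m) - 1/4)]
  have hsm : (0:ℝ) ≤ s ^ m := pow_nonneg hs m
  have hq1m : (0:ℝ) < q ^ (m+1) := pow_pos hq0 _
  calc |aa q ν (m+1)| * s ^ (m+1) = (|aa q ν (m+1)|) * (s * s ^ m) := by rw [pow_succ']
    _ ≤ (4 * (q ^ (m+1) * |aa q ν m|)) * (s * s ^ m) := by
        apply mul_le_mul_of_nonneg_right hA4 (by positivity)
    _ = 4 * (q ^ (m+1) * s) * (|aa q ν m| * s ^ m) := by ring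
    _ ≤ 4 * (1/8) * (|aa q ν m| * s ^ m) := by
        apply mul_le_mul_of_nonneg_right _ (by positivity)
        nlinarith
    _ = 1/2 * (|aa q ν m| * s ^ m) := by ring

noncomputable def Bf (q ν : ℝ) (w : ℂ) : ℂ := ∑' m : ℕ, (aa q ν m : ℂ) * w ^ m

noncomputable def Sa (q ν : ℝ) : ℝ := ∑' m : ℕ, |aa q ν m|

lemma norm_term (w : ℂ) (m : ℕ) : ‖(aa q ν m : ℂ) * w ^ m‖ = |aa q ν m| * Complex.abs w ^ m := by
  simp [Complex.norm_eq_abs, map_mul, Complex.abs_ofReal, map_pow]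

lemma summable_norm_Bf (hq0 : 0 < q) (hq1 : q < 1) (hν : -1 < ν) (w : ℂ) :
    Summable (fun m : ℕ => ‖(aa q ν m : ℂ) * w ^ m‖) :=
  (summable_abs_aa hq0 hq1 hν (Complex.abs w) (Complex.abs.nonneg w)).congr
    (fun m => (norm_term w m).symm)

lemma summable_Bf (hq0 : 0 < q) (hq1 : q < 1) (hν : -1 < ν) (w : ℂ) :
    Summable (fun m : ℕ => (aa q ν m : ℂ) * w ^ m) :=
  (summable_norm_Bf hq0 hq1 hν w).of_norm

lemma summable_Sa (hq0 : 0 < q) (hq1 : q < 1) (hν : -1 < ν) :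
    Summable (fun m : ℕ => |aa q ν m|) :=
  (summable_abs_aa hq0 hq1 hν 1 zero_le_one).congr (fun m => by simp)

lemma Sa_nonneg (hq0 : 0 < q) (hq1 : q < 1) (hν : -1 < ν) : 0 ≤ Sa q ν :=
  tsum_nonneg (fun m => abs_nonneg _)

/-- norm bound for ‖w‖ ≤ 1 -/
lemma Bf_norm_le (hq0 : 0 < q) (hq1 : q < 1) (hν : -1 < ν) (w : ℂ) (hw : Complex.abs w ≤ 1) :
    Complex.abs (Bf q ν w) ≤ Sa q ν := by
  rw [Bf, ← Complex.norm_eq_abs, Sa]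
  refine (norm_tsum_le_tsum_norm (summable_norm_Bf hq0 hq1 hν w)).trans ?_
  apply Summable.tsum_le_tsum _ (summable_norm_Bf hq0 hq1 hν w) (summable_Sa hq0 hq1 hν)
  intro m
  rw [norm_term]
  have h1 : Complex.abs w ^ m ≤ 1 := pow_le_one₀ (Complex.abs.nonneg w) hw
  nlinarith [abs_nonneg (aa q ν m), pow_nonneg (Complex.abs.nonneg w) m]

/-- difference bound: ‖Bf w − Bf (q w)‖ ≤ Sa * ‖w‖ for ‖w‖ ≤ 1. -/
lemma Bf_diff_le (hq0 : 0 < q) (hq1 : q < 1) (hν : -1 < ν) (w : ℂ) (hw : Complex.abs w ≤ 1) :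
    Complex.abs (Bf q ν w - Bf q ν ((q:ℂ) * w)) ≤ Sa q ν * Complex.abs w := by
  have S1 := summable_Bf hq0 hq1 hν w
  have S2 := summable_Bf hq0 hq1 hν ((q:ℂ) * w)
  rw [Bf, Bf, ← Summable.tsum_sub S1 S2, ← Complex.norm_eq_abs]
  have Sd : Summable (fun m : ℕ => (aa q ν m : ℂ) * w ^ m - (aa q ν m : ℂ) * ((q:ℂ) * w) ^ m) :=
    S1.sub S2
  refine (norm_tsum_le_tsum_norm Sd.norm).trans ?_
  rw [Sa, ← tsum_mul_right]
  apply Summable.tsum_le_tsum _ Sd.norm ((summable_Sa hq0 hq1 hν).mul_right _)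
  intro m
  match m with
  | 0 => simp [abs_nonneg, mul_nonneg (abs_nonneg _) (Complex.abs.nonneg w)]
  | Nat.succ m =>
    have : (aa q ν (m+1) : ℂ) * w ^ (m+1) - (aa q ν (m+1) : ℂ) * ((q:ℂ) * w) ^ (m+1)
        = (aa q ν (m+1) : ℂ) * (1 - (q:ℂ) ^ (m+1)) * w ^ (m+1) := by ring
    rw [this]
    simp only [Complex.norm_eq_abs, map_mul, Complex.abs_ofReal, map_pow]
    have hq1c : Complex.abs (1 - (q:ℂ) ^ (m+1)) ≤ 1 := by
      have : (1 : ℂ) - (q:ℂ) ^ (m+1) = ((1 - q ^ (m+1) : ℝ) : ℂ) := by push_cast; ring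
      rw [this, Complex.abs_ofReal, _root_.abs_of_nonneg]
      · nlinarith [pow_pos hq0 (m+1)]
      · nlinarith [pow_pos hq0 (m+1), pow_le_one₀ hq0.le hq1.le (n := m+1)]
    have hwm : Complex.abs w ^ (m+1) ≤ Complex.abs w := by
      calc Complex.abs w ^ (m+1) = Complex.abs w ^ m * Complex.abs w := by rw [pow_succ]
      _ ≤ 1 * Complex.abs w := by
          apply mul_le_mul_of_nonneg_right (pow_le_one₀ (Complex.abs.nonneg w) hw) (Complex.abs.nonneg w)
      _ = Complex.abs w := one_mul _
    calc |aa q ν (m+1)| * Complex.abs (1 - (q:ℂ)^(m+1)) * Complex.abs w ^ (m+1)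
        ≤ |aa q ν (m+1)| * 1 * Complex.abs w := by
          apply mul_le_mul (mul_le_mul_of_nonneg_left hq1c (abs_nonneg _)) hwm
            (pow_nonneg (Complex.abs.nonneg w) _) (by positivity)
      _ = |aa q ν (m+1)| * Complex.abs w := by ring

lemma Bf_conj (w : ℂ) : Bf q ν ((starRingEnd ℂ) w) = (starRingEnd ℂ) (Bf q ν w) := by
  rw [Bf, Bf]
  have h : ∀ m : ℕ, (aa q ν m : ℂ) * ((starRingEnd ℂ) w) ^ m = star ((aa q ν m : ℂ) * w ^ m) := by
    intro m
    simp only [star_def, map_mul, map_pow, Complex.conj_ofReal]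
  rw [tsum_congr h, ← tsum_star]
  rfl


/-- The q-difference equation for Bf. -/
lemma funcEq (hq0 : 0 < q) (hq1 : q < 1) (hν : -1 < ν) (w : ℂ) :
    Bf q ν w = (1 + ((q ^ ν : ℝ) : ℂ) - (q:ℂ) * w) * Bf q ν ((q:ℂ) * w)
      - ((q ^ ν : ℝ) : ℂ) * Bf q ν ((q:ℂ) ^ 2 * w) := by
  set Qν : ℝ := q ^ ν with hQν
  have S1 := summable_Bf hq0 hq1 hν w
  have S2 := summable_Bf hq0 hq1 hν ((q:ℂ) * w)
  have S3 := summable_Bf hq0 hq1 hν ((q:ℂ) ^ 2 * w)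
  set G : ℕ → ℂ := fun m =>
    (aa q ν m : ℂ) * (1 - (q:ℂ) ^ m) * (1 - (Qν:ℂ) * (q:ℂ) ^ m) * w ^ m with hG
  have hterm : ∀ m : ℕ, G m = (aa q ν m : ℂ) * w ^ m
      - (1 + (Qν:ℂ)) * ((aa q ν m : ℂ) * ((q:ℂ) * w) ^ m)
      + (Qν:ℂ) * ((aa q ν m : ℂ) * ((q:ℂ) ^ 2 * w) ^ m) := by
    intro m
    simp only [hG, mul_pow]
    ring
  have SG : Summable G := by
    refine ((S1.sub (S2.mul_left (1 + (Qν:ℂ)))).add (S3.mul_left ((Qν:ℂ)))).congr (fun m => ?_)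
    rw [hterm m]
  have Eq1 : ∑' m, G m = Bf q ν w - (1 + (Qν:ℂ)) * Bf q ν ((q:ℂ) * w)
      + (Qν:ℂ) * Bf q ν ((q:ℂ) ^ 2 * w) := by
    rw [tsum_congr hterm, Summable.tsum_add (S1.sub (S2.mul_left (1 + (Qν:ℂ)))) (S3.mul_left ((Qν:ℂ))),
      Summable.tsum_sub S1 (S2.mul_left (1 + (Qν:ℂ))), tsum_mul_left, tsum_mul_left]
    rfl
  have hr : ∀ m : ℕ, aa q ν (m+1) * ((1 - q ^ (m+1)) * (1 - Qν * q ^ (m+1)))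
      = -(q ^ (m+1)) * aa q ν m := by
    intro m
    have : Qν * q ^ (m+1) = q ^ (ν+1) * q ^ m := by
      rw [Real.rpow_add_one hq0.ne', hQν, pow_succ]; ring
    rw [this]
    exact aa_key hq0 hq1 hν m
  have Eq2 : ∑' m, G m = -((q:ℂ) * w) * Bf q ν ((q:ℂ) * w) := by
    rw [SG.tsum_eq_zero_add]
    have hG0 : G 0 = 0 := by simp [hG]
    have hGs : ∀ m : ℕ, G (m + 1) = -((q:ℂ) * w) * ((aa q ν m : ℂ) * ((q:ℂ) * w) ^ m) := by
      intro m
      have hc : ((aa q ν (m+1) * ((1 - q ^ (m+1)) * (1 - Qν * q ^ (m+1))) : ℝ) : ℂ)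
          = ((-(q ^ (m+1)) * aa q ν m : ℝ) : ℂ) := by rw [hr m]
      push_cast at hc
      calc G (m+1) = ((aa q ν (m+1) : ℂ) * ((1 - (q:ℂ) ^ (m+1)) * (1 - (Qν:ℂ) * (q:ℂ) ^ (m+1)))) * w ^ (m+1) := by
            simp only [hG]; ring
        _ = (-((q:ℂ) ^ (m+1)) * (aa q ν m : ℂ)) * w ^ (m+1) := by rw [hc]
        _ = -((q:ℂ) * w) * ((aa q ν m : ℂ) * ((q:ℂ) * w) ^ m) := by
            rw [mul_pow, pow_succ, pow_succ]; ring
    rw [hG0, tsum_congr hGs, tsum_mul_left, zero_add]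
    rfl
  have h := Eq1.symm.trans Eq2
  linear_combination h

noncomputable def Wf (q ν : ℝ) (x : ℂ) (j : ℤ) : ℂ := Bf q ν (x^2 * ((q ^ (-(j:ℝ)) : ℝ) : ℂ))
noncomputable def rr (q ν : ℝ) (j : ℤ) : ℝ := q ^ (-(j:ℝ) * (ν+1)/2)
noncomputable def uu (q ν : ℝ) (j : ℤ) : ℝ := q ^ (((j:ℝ)+ν)/2)
noncomputable def vv (q : ℝ) (j : ℤ) : ℝ := q ^ ((j:ℝ)/2)
noncomputable def Qf (q ν : ℝ) (x : ℂ) (j : ℤ) : ℂ := (-1:ℂ)^j * ((rr q ν j : ℝ) : ℂ) * Wf q ν x j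

lemma Wrec (hq0 : 0 < q) (hq1 : q < 1) (hν : -1 < ν) (x : ℂ) (j : ℤ) :
    Wf q ν x (j+1) = (1 + ((q^ν:ℝ):ℂ) - x^2 * ((q ^ (-(j:ℝ)) : ℝ):ℂ)) * Wf q ν x j
      - ((q^ν:ℝ):ℂ) * Wf q ν x (j-1) := by
  have h := funcEq hq0 hq1 hν (x^2 * ((q ^ (-((j:ℝ)+1)) : ℝ):ℂ))
  have e1 : (q:ℂ) * (x^2 * ((q ^ (-((j:ℝ)+1)) : ℝ):ℂ)) = x^2 * ((q ^ (-(j:ℝ)) : ℝ):ℂ) := by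
    rw [show -(j:ℝ) = 1 + (-((j:ℝ)+1)) by ring, Real.rpow_add hq0, Real.rpow_one]
    push_cast; ring
  have e2 : (q:ℂ)^2 * (x^2 * ((q ^ (-((j:ℝ)+1)) : ℝ):ℂ)) = x^2 * ((q ^ (-((j:ℝ)-1)) : ℝ):ℂ) := by
    rw [show -((j:ℝ)-1) = 2 + (-((j:ℝ)+1)) by ring, Real.rpow_add hq0,
      show (2:ℝ) = ((2:ℕ):ℝ) by norm_num, Real.rpow_natCast]
    push_cast; ring
  rw [e1, e2] at h
  have w1 : Wf q ν x (j+1) = Bf q ν (x^2 * ((q ^ (-((j:ℝ)+1)) : ℝ):ℂ)) := by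
    unfold Wf; norm_num
  have w2 : Wf q ν x (j-1) = Bf q ν (x^2 * ((q ^ (-((j:ℝ)-1)) : ℝ):ℂ)) := by
    unfold Wf; norm_num
  rw [w1, w2, h]
  rfl

lemma id1 (hq0 : 0 < q) (j : ℤ) :
    vv q j * uu q ν (j+1) * rr q ν (j+1) = q ^ ((j:ℝ)) * rr q ν j := by
  unfold vv uu rr
  rw [← Real.rpow_add hq0, ← Real.rpow_add hq0, ← Real.rpow_add hq0]
  congr 1
  push_cast; ring

lemma id2 (hq0 : 0 < q) (j : ℤ) :
    vv q (j-1) * uu q ν j * rr q ν (j-1) = q ^ ((j:ℝ)) * q ^ ν * rr q ν j := by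
  unfold vv uu rr
  rw [← Real.rpow_add hq0, ← Real.rpow_add hq0, ← Real.rpow_add hq0, ← Real.rpow_add hq0]
  congr 1
  push_cast; ring

lemma id3 (hq0 : 0 < q) (j : ℤ) :
    vv q (j-1)^2 + uu q ν (j-1)^2 = q ^ ((j:ℝ)-1) * (1 + q ^ ν) := by
  have ha : vv q (j-1)^2 = q ^ ((j:ℝ)-1) := by
    unfold vv; rw [sq, ← Real.rpow_add hq0]; congr 1; push_cast; ring
  have hb : uu q ν (j-1)^2 = q ^ ((j:ℝ)-1) * q ^ ν := by
    unfold uu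
    rw [sq, ← Real.rpow_add hq0,
      show ((((j-1:ℤ)):ℝ)+ν)/2 + ((((j-1:ℤ)):ℝ)+ν)/2 = ((j:ℝ)-1) + ν by push_cast; ring,
      Real.rpow_add hq0]
  rw [ha, hb]; ring

lemma qjcancel (hq0 : 0 < q) (j : ℤ) : ((q ^ ((j:ℝ)) : ℝ):ℂ) * ((q ^ (-(j:ℝ)) : ℝ):ℂ) = 1 := by
  rw [← Complex.ofReal_mul, ← Real.rpow_add hq0]
  norm_num

lemma Qrec (hq0 : 0 < q) (hq1 : q < 1) (hν : -1 < ν) (x : ℂ) (j : ℤ) :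
    x^2 * Qf q ν x j = ((vv q j * uu q ν (j+1) : ℝ):ℂ) * Qf q ν x (j+1)
      + ((q ^ ((j:ℝ)) * (1 + q ^ ν) : ℝ):ℂ) * Qf q ν x j
      + ((vv q (j-1) * uu q ν j : ℝ):ℂ) * Qf q ν x (j-1) := by
  have n1 : ((-1:ℂ))^(j+1) = -((-1:ℂ))^j := by
    rw [zpow_add_one₀ (by norm_num : (-1:ℂ) ≠ 0)]; ring
  have n2 : ((-1:ℂ))^(j-1) = -((-1:ℂ))^j := by
    rw [zpow_sub_one₀ (by norm_num : (-1:ℂ) ≠ 0)]; norm_num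
  have c1 : ((vv q j : ℝ):ℂ) * ((uu q ν (j+1) : ℝ):ℂ) * ((rr q ν (j+1) : ℝ):ℂ)
      = ((q ^ ((j:ℝ)) : ℝ):ℂ) * ((rr q ν j : ℝ):ℂ) := by
    exact_mod_cast congrArg Complex.ofReal (id1 (ν := ν) hq0 j)
  have c2 : ((vv q (j-1) : ℝ):ℂ) * ((uu q ν j : ℝ):ℂ) * ((rr q ν (j-1) : ℝ):ℂ)
      = ((q ^ ((j:ℝ)) : ℝ):ℂ) * ((q ^ ν : ℝ):ℂ) * ((rr q ν j : ℝ):ℂ) := by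
    exact_mod_cast congrArg Complex.ofReal (id2 (ν := ν) hq0 j)
  have c3 := qjcancel hq0 j
  simp only [Qf, n1, n2]
  rw [Wrec hq0 hq1 hν x j]
  push_cast
  linear_combination ((-1:ℂ)^j * ((1 + ((q^ν:ℝ):ℂ) - x^2*((q ^ (-(j:ℝ)) : ℝ):ℂ)) * Wf q ν x j - ((q^ν:ℝ):ℂ) * Wf q ν x (j-1))) * c1 + ((-1:ℂ)^j * Wf q ν x (j-1)) * c2 + (-((-1:ℂ)^j * ((rr q ν j : ℝ):ℂ) * x^2 * Wf q ν x j)) * c3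

noncomputable def Rodd (q ν : ℝ) (x : ℂ) (j : ℤ) : ℂ :=
  (((uu q ν j : ℝ):ℂ) * Qf q ν x j + ((vv q (j-1) : ℝ):ℂ) * Qf q ν x (j-1)) / x

noncomputable def Gt (q ν : ℝ) (x : ℂ) (j : ℤ) : ℝ :=
  uu q ν j * (Qf q ν x j * (starRingEnd ℂ) (Rodd q ν x j)).im

lemma evenEq (hq0 : 0 < q) (hq1 : q < 1) (hν : -1 < ν) (x : ℂ) (hx : x ≠ 0) (j : ℤ) :
    x * Qf q ν x (j-1) = ((vv q (j-1) : ℝ):ℂ) * Rodd q ν x j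
      + ((uu q ν (j-1) : ℝ):ℂ) * Rodd q ν x (j-1) := by
  have hQ := Qrec hq0 hq1 hν x (j-1)
  rw [sub_add_cancel, show j - 1 - 1 = j - 2 by ring] at hQ
  have hi3 : ((vv q (j-1) : ℝ):ℂ)^2 + ((uu q ν (j-1) : ℝ):ℂ)^2
      = ((q ^ ((j:ℝ)-1) * (1 + q ^ ν) : ℝ):ℂ) := by
    exact_mod_cast congrArg Complex.ofReal (id3 (ν := ν) hq0 j)
  have hexp : ((q ^ (((j-1:ℤ)):ℝ) * (1 + q ^ ν) : ℝ):ℂ) = ((q ^ ((j:ℝ)-1) * (1 + q ^ ν) : ℝ):ℂ) := by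
    norm_num
  rw [hexp] at hQ
  rw [Rodd, Rodd, show j - 1 - 1 = j - 2 by ring]
  field_simp
  push_cast at hQ hi3 ⊢
  linear_combination hQ - Qf q ν x (j-1) * hi3

lemma im_ofReal_mul (r : ℝ) (z : ℂ) : ((r:ℂ) * z).im = r * z.im := by
  simp [Complex.mul_im]

lemma im_antisym (z w : ℂ) : (z * (starRingEnd ℂ) w).im = -((w * (starRingEnd ℂ) z).im) := by
  simp [Complex.mul_im]; ring

lemma Gstep (hq0 : 0 < q) (hq1 : q < 1) (hν : -1 < ν) (x : ℂ) (hx : x ≠ 0) (j : ℤ) :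
    Gt q ν x j - Gt q ν x (j-1)
      = x.im * (Complex.normSq (Rodd q ν x j) + Complex.normSq (Qf q ν x (j-1))) := by
  set E := Rodd q ν x j with hE
  set D := Qf q ν x (j-1) with hD
  set F := Qf q ν x j with hF
  set P := Rodd q ν x (j-1) with hP
  have e1' : x * E = ((uu q ν j : ℝ):ℂ) * F + ((vv q (j-1) : ℝ):ℂ) * D := by
    rw [hE, Rodd, mul_div_cancel₀ _ hx]
  have e2' := evenEq hq0 hq1 hν x hx j
  have A : x.im * Complex.normSq E
      = uu q ν j * (F * (starRingEnd ℂ) E).im + vv q (j-1) * (D * (starRingEnd ℂ) E).im := by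
    have h0 : (x * E * (starRingEnd ℂ) E).im = x.im * Complex.normSq E := by
      rw [mul_assoc, Complex.mul_conj]
      simp
    rw [← h0, e1', add_mul, Complex.add_im, mul_assoc, mul_assoc, im_ofReal_mul, im_ofReal_mul]
  have B : x.im * Complex.normSq D
      = vv q (j-1) * (E * (starRingEnd ℂ) D).im + uu q ν (j-1) * (P * (starRingEnd ℂ) D).im := by
    have h0 : (x * D * (starRingEnd ℂ) D).im = x.im * Complex.normSq D := by
      rw [mul_assoc, Complex.mul_conj]
      simp
    rw [← h0, e2', add_mul, Complex.add_im, mul_assoc, mul_assoc, im_ofReal_mul, im_ofReal_mul]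
  have h1 := im_antisym D E
  have h2 := im_antisym P D
  show uu q ν j * (F * (starRingEnd ℂ) E).im - uu q ν (j-1) * (D * (starRingEnd ℂ) P).im = _
  linear_combination -A - B - vv q (j-1) * h1 - uu q ν (j-1) * h2

lemma znn (j : ℤ) : ((-1:ℂ))^j * ((-1:ℂ))^j = 1 := by
  rw [← zpow_add₀ (by norm_num : (-1:ℂ) ≠ 0), show j + j = 2*j by ring, zpow_mul]
  norm_num

lemma znm (j : ℤ) : ((-1:ℂ))^j * ((-1:ℂ))^(j-1) = -1 := by
  rw [zpow_sub_one₀ (by norm_num : (-1:ℂ) ≠ 0), ← mul_assoc, znn j]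
  norm_num

lemma id4a (hq0 : 0 < q) (j : ℤ) :
    uu q ν j * rr q ν j = q ^ (ν*(1-(j:ℝ))/2) := by
  unfold uu rr
  rw [← Real.rpow_add hq0]
  congr 1; ring

lemma id4b (hq0 : 0 < q) (j : ℤ) :
    vv q (j-1) * rr q ν (j-1) = q ^ (ν*(1-(j:ℝ))/2) := by
  unfold vv rr
  rw [← Real.rpow_add hq0]
  congr 1; push_cast; ring

/-- structural rewrite of the summand of G. -/
lemma CC (hq0 : 0 < q) (hq1 : q < 1) (hν : -1 < ν) (x : ℂ) (hx : x ≠ 0) (j : ℤ) :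
    Qf q ν x j * (starRingEnd ℂ) (Rodd q ν x j)
      = ((q ^ (ν*(1-(j:ℝ))/2) * rr q ν j : ℝ) : ℂ) * (((Complex.normSq x : ℝ) : ℂ))⁻¹
        * (Wf q ν x j * (starRingEnd ℂ) (Wf q ν x j - Wf q ν x (j-1)) * x) := by
  have hconjx : ((starRingEnd ℂ) x)⁻¹ = x * (((Complex.normSq x : ℝ) : ℂ))⁻¹ := by
    rw [Complex.inv_def, Complex.conj_conj, Complex.normSq_conj, Complex.ofReal_inv]
  have h4a : ((uu q ν j : ℝ):ℂ) * ((rr q ν j : ℝ):ℂ) = ((q ^ (ν*(1-(j:ℝ))/2) : ℝ):ℂ) := by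
    exact_mod_cast congrArg Complex.ofReal (id4a (ν := ν) hq0 j)
  have h4b : ((vv q (j-1) : ℝ):ℂ) * ((rr q ν (j-1) : ℝ):ℂ) = ((q ^ (ν*(1-(j:ℝ))/2) : ℝ):ℂ) := by
    exact_mod_cast congrArg Complex.ofReal (id4b (ν := ν) hq0 j)
  have hz1 := znn j
  have hz2 := znm j
  unfold Rodd Qf
  rw [map_div₀, div_eq_mul_inv, hconjx]
  simp only [map_add, map_mul, Complex.conj_ofReal, map_zpow₀, map_neg, map_one, map_sub]
  push_cast [Complex.ofReal_inv]
  linear_combination (((uu q ν j : ℝ):ℂ) * ((rr q ν j : ℝ):ℂ) * ((rr q ν j : ℝ):ℂ)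
      * Wf q ν x j * (starRingEnd ℂ) (Wf q ν x j) * x * (((Complex.normSq x : ℝ):ℂ))⁻¹) * hz1
    + (((rr q ν j : ℝ):ℂ) * Wf q ν x j * (starRingEnd ℂ) (Wf q ν x j) * x
      * (((Complex.normSq x : ℝ):ℂ))⁻¹) * h4a
    + (((vv q (j-1) : ℝ):ℂ) * ((rr q ν (j-1) : ℝ):ℂ) * ((rr q ν j : ℝ):ℂ)
      * Wf q ν x j * (starRingEnd ℂ) (Wf q ν x (j-1)) * x * (((Complex.normSq x : ℝ):ℂ))⁻¹) * hz2
    - (((rr q ν j : ℝ):ℂ) * Wf q ν x j * (starRingEnd ℂ) (Wf q ν x (j-1)) * x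
      * (((Complex.normSq x : ℝ):ℂ))⁻¹) * h4b
lemma quadkey (t u A E D : ℝ) (ht : 0 < t) (hu : 0 < u) (hA : 0 ≤ A) (hE : 0 ≤ E) (hD : 0 ≤ D)
    (h : t*(E^2 + D^2) ≤ u*A*E) : t*D ≤ u*A := by
  nlinarith [sq_nonneg (2*t*E - u*A), sq_nonneg (2*t*D - u*A), sq_nonneg (2*t*D + u*A),
    mul_nonneg hu.le hA, mul_nonneg ht.le hD, sq_nonneg (t*D), mul_pos ht ht]

lemma Gt_abs_le (hq0 : 0 < q) (hq1 : q < 1) (hν : -1 < ν) (x : ℂ) (hx : x ≠ 0) (j : ℤ)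
    (hsmall : Complex.abs x ^ 2 * q ^ (-(j:ℝ)) ≤ 1) :
    |Gt q ν x j| ≤ q ^ ν * Sa q ν * Sa q ν * Complex.abs x * q ^ (-(j:ℝ)*(ν+1)) := by
  have hSa := Sa_nonneg hq0 hq1 hν
  have hrp : (0:ℝ) < q ^ (-(j:ℝ)) := Real.rpow_pos_of_pos hq0 _
  set ζ : ℂ := x^2 * ((q ^ (-(j:ℝ)) : ℝ) : ℂ) with hζ
  have habsζ : Complex.abs ζ = Complex.abs x ^ 2 * q ^ (-(j:ℝ)) := by
    rw [hζ, map_mul, map_pow, Complex.abs_ofReal, _root_.abs_of_pos hrp]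
  have hζ1 : Complex.abs ζ ≤ 1 := by rw [habsζ]; exact hsmall
  have hWj : Complex.abs (Wf q ν x j) ≤ Sa q ν := Bf_norm_le hq0 hq1 hν ζ hζ1
  have hqζ : (q:ℂ) * ζ = x^2 * ((q ^ (-((j:ℝ)-1)) : ℝ) : ℂ) := by
    rw [show -((j:ℝ)-1) = 1 + -(j:ℝ) by ring, Real.rpow_add hq0, Real.rpow_one]
    push_cast; ring
  have hWm : Wf q ν x (j-1) = Bf q ν ((q:ℂ) * ζ) := by
    rw [hqζ]; unfold Wf; norm_num
  have hdiff : Complex.abs (Wf q ν x j - Wf q ν x (j-1)) ≤ Sa q ν * Complex.abs ζ := by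
    rw [hWm]
    exact Bf_diff_le hq0 hq1 hν ζ hζ1
  have hns : Complex.normSq x = Complex.abs x ^ 2 := Complex.normSq_eq_abs x
  have hnspos : (0:ℝ) < Complex.normSq x := Complex.normSq_pos.mpr hx
  -- rewrite Gt via CC
  have hGt : Gt q ν x j = (uu q ν j * ((q ^ (ν*(1-(j:ℝ))/2) * rr q ν j) * (Complex.normSq x)⁻¹))
      * (Wf q ν x j * (starRingEnd ℂ) (Wf q ν x j - Wf q ν x (j-1)) * x).im := by
    rw [Gt, CC hq0 hq1 hν x hx j]
    rw [show ((q ^ (ν*(1-(j:ℝ))/2) * rr q ν j : ℝ) : ℂ) * (((Complex.normSq x : ℝ) : ℂ))⁻¹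
        = (((q ^ (ν*(1-(j:ℝ))/2) * rr q ν j) * (Complex.normSq x)⁻¹ : ℝ) : ℂ) by push_cast; ring,
      im_ofReal_mul]
    ring
  rw [hGt, abs_mul]
  have hcoef : |uu q ν j * ((q ^ (ν*(1-(j:ℝ))/2) * rr q ν j) * (Complex.normSq x)⁻¹)|
      = uu q ν j * ((q ^ (ν*(1-(j:ℝ))/2) * rr q ν j) * (Complex.normSq x)⁻¹) := by
    apply _root_.abs_of_pos
    have h1 : (0:ℝ) < uu q ν j := Real.rpow_pos_of_pos hq0 _
    have h2 : (0:ℝ) < q ^ (ν*(1-(j:ℝ))/2) := Real.rpow_pos_of_pos hq0 _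
    have h3 : (0:ℝ) < rr q ν j := Real.rpow_pos_of_pos hq0 _
    positivity
  rw [hcoef]
  have hZ : |(Wf q ν x j * (starRingEnd ℂ) (Wf q ν x j - Wf q ν x (j-1)) * x).im|
      ≤ Sa q ν * (Sa q ν * Complex.abs ζ) * Complex.abs x := by
    refine (Complex.abs_im_le_abs _).trans ?_
    rw [map_mul, map_mul, Complex.abs_conj]
    gcongr
  have huur : uu q ν j * (q ^ (ν*(1-(j:ℝ))/2) * rr q ν j) = q ^ (ν*(1-(j:ℝ))) := by
    unfold uu rr
    rw [← Real.rpow_add hq0, ← Real.rpow_add hq0]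
    congr 1; ring
  have hfin : uu q ν j * ((q ^ (ν*(1-(j:ℝ))/2) * rr q ν j) * (Complex.normSq x)⁻¹)
      * (Sa q ν * (Sa q ν * Complex.abs ζ) * Complex.abs x)
      = q ^ ν * Sa q ν * Sa q ν * Complex.abs x * q ^ (-(j:ℝ)*(ν+1)) := by
    rw [habsζ, hns]
    have habsx : (0:ℝ) < Complex.abs x := by
      simpa [Complex.norm_eq_abs] using norm_pos_iff.mpr hx
    field_simp
    rw [show uu q ν j * q ^ (ν*(1-(j:ℝ))/2) * rr q ν j * Sa q ν ^ 2 * q ^ (-(j:ℝ)) = (uu q ν j * (q ^ (ν*(1-(j:ℝ))/2) * rr q ν j)) * q ^ (-(j:ℝ)) * Sa q ν ^ 2 by ring, huur]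
    rw [show q ^ (ν*(1-(j:ℝ))) * q ^ (-(j:ℝ)) = q ^ (ν*(1-(j:ℝ)) + -(j:ℝ)) from (Real.rpow_add hq0 _ _).symm]
    rw [show ν*(1-(j:ℝ)) + -(j:ℝ) = ν + -((j:ℝ)*(ν+1)) by ring, Real.rpow_add hq0]
    ring
  calc uu q ν j * ((q ^ (ν*(1-(j:ℝ))/2) * rr q ν j) * (Complex.normSq x)⁻¹)
      * |(Wf q ν x j * (starRingEnd ℂ) (Wf q ν x j - Wf q ν x (j-1)) * x).im|
      ≤ uu q ν j * ((q ^ (ν*(1-(j:ℝ))/2) * rr q ν j) * (Complex.normSq x)⁻¹)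
        * (Sa q ν * (Sa q ν * Complex.abs ζ) * Complex.abs x) := by
        apply mul_le_mul_of_nonneg_left hZ
        have h1 : (0:ℝ) < uu q ν j := Real.rpow_pos_of_pos hq0 _
        have h2 : (0:ℝ) < q ^ (ν*(1-(j:ℝ))/2) := Real.rpow_pos_of_pos hq0 _
        have h3 : (0:ℝ) < rr q ν j := Real.rpow_pos_of_pos hq0 _
        positivity
    _ = _ := hfin

lemma Gmono (hq0 : 0 < q) (hq1 : q < 1) (hν : -1 < ν) (x : ℂ) (hx : x ≠ 0)
    (hxim : 0 ≤ x.im) (j : ℤ) : Gt q ν x (j-1) ≤ Gt q ν x j := by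
  have h := Gstep hq0 hq1 hν x hx j
  nlinarith [Complex.normSq_nonneg (Rodd q ν x j), Complex.normSq_nonneg (Qf q ν x (j-1)),
    mul_nonneg hxim (add_nonneg (Complex.normSq_nonneg (Rodd q ν x j)) (Complex.normSq_nonneg (Qf q ν x (j-1))))]

lemma GmonoN (hq0 : 0 < q) (hq1 : q < 1) (hν : -1 < ν) (x : ℂ) (hx : x ≠ 0)
    (hxim : 0 ≤ x.im) : ∀ (m : ℕ) (j : ℤ), Gt q ν x (j - (m:ℤ)) ≤ Gt q ν x j := by
  intro m
  induction m with
  | zero => intro j; simp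
  | succ m ih =>
    intro j
    have h1 : j - ((m+1 : ℕ):ℤ) = (j - (m:ℤ)) - 1 := by push_cast; ring
    rw [h1]
    exact (Gmono hq0 hq1 hν x hx hxim (j - (m:ℤ))).trans (ih j)

lemma Glimit (hq0 : 0 < q) (hq1 : q < 1) (hν : -1 < ν) (x : ℂ) (hx : x ≠ 0) (j : ℤ) :
    Tendsto (fun m : ℕ => Gt q ν x (j - 1 - (m:ℤ))) atTop (nhds 0) := by
  have hq1' : q ^ (ν+1) < 1 := Real.rpow_lt_one hq0.le hq1 (by linarith)
  have hq0' : (0:ℝ) < q ^ (ν+1) := Real.rpow_pos_of_pos hq0 _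
  apply squeeze_zero_norm'
    (a := fun m : ℕ => (q ^ ν * Sa q ν * Sa q ν * Complex.abs x * q ^ (((1:ℝ)-(j:ℝ))*(ν+1))) * (q ^ (ν+1)) ^ m)
  · -- eventual bound
    have hsm : Tendsto (fun m : ℕ => Complex.abs x ^ 2 * q ^ ((1:ℝ)-(j:ℝ)) * q ^ m) atTop (nhds 0) := by
      have := (tendsto_pow_atTop_nhds_zero_of_lt_one hq0.le hq1).const_mul
        (Complex.abs x ^ 2 * q ^ ((1:ℝ)-(j:ℝ)))
      simpa using this
    have hev := hsm.eventually (eventually_le_nhds (by norm_num : (0:ℝ) < 1)) -- gives ≤ something?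
    filter_upwards [hsm.eventually (eventually_le_nhds (by norm_num : (0:ℝ) < 1))] with m hm
    have hcast : -(((j - 1 - (m:ℤ)):ℤ):ℝ) = ((1:ℝ)-(j:ℝ)) + (m:ℝ) := by push_cast; ring
    have hsmall : Complex.abs x ^ 2 * q ^ (-(((j - 1 - (m:ℤ)):ℤ):ℝ)) ≤ 1 := by
      rw [hcast, Real.rpow_add hq0, Real.rpow_natCast]
      calc Complex.abs x ^ 2 * (q ^ ((1:ℝ)-(j:ℝ)) * q ^ m)
          = Complex.abs x ^ 2 * q ^ ((1:ℝ)-(j:ℝ)) * q ^ m := by ring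
        _ ≤ 1 := hm
    have hb := Gt_abs_le hq0 hq1 hν x hx (j - 1 - (m:ℤ)) hsmall
    rw [Real.norm_eq_abs]
    refine hb.trans ?_
    have h2 : q ^ ((ν+1)*(m:ℝ)) = (q ^ (ν+1)) ^ m := by
      rw [Real.rpow_mul hq0.le, Real.rpow_natCast]
    have : q ^ (-(((j - 1 - (m:ℤ)):ℤ):ℝ)*(ν+1)) = q ^ (((1:ℝ)-(j:ℝ))*(ν+1)) * (q ^ (ν+1)) ^ m := by
      rw [show -(((j - 1 - (m:ℤ)):ℤ):ℝ)*(ν+1) = ((1:ℝ)-(j:ℝ))*(ν+1) + (ν+1)*(m:ℝ) by push_cast; ring,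
        Real.rpow_add hq0, h2]
    rw [this]
    ring_nf
    exact le_refl _
  · have := (tendsto_pow_atTop_nhds_zero_of_lt_one hq0'.le hq1').const_mul
      (q ^ ν * Sa q ν * Sa q ν * Complex.abs x * q ^ (((1:ℝ)-(j:ℝ))*(ν+1)))
    simpa using this

/-- Core inequality. -/
lemma coreB (hq0 : 0 < q) (hq1 : q < 1) (hν : -1 < ν) (x : ℂ) (hxim : 0 < x.im) (j : ℤ) :
    x.im * Complex.abs (Qf q ν x (j-1)) ≤ uu q ν j * Complex.abs (Qf q ν x j) := by
  have hx : x ≠ 0 := by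
    intro h; rw [h] at hxim; simp at hxim
  have key : x.im * (Complex.normSq (Rodd q ν x j) + Complex.normSq (Qf q ν x (j-1))) ≤ Gt q ν x j := by
    have h1 : ∀ m : ℕ, x.im * (Complex.normSq (Rodd q ν x j) + Complex.normSq (Qf q ν x (j-1)))
        ≤ Gt q ν x j - Gt q ν x (j - 1 - (m:ℤ)) := by
      intro m
      have hs := Gstep hq0 hq1 hν x hx j
      have hmono := GmonoN hq0 hq1 hν x hx hxim.le m (j-1)
      linarith
    have h2 : Tendsto (fun m : ℕ => Gt q ν x j - Gt q ν x (j - 1 - (m:ℤ))) atTop (nhds (Gt q ν x j - 0)) :=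
      tendsto_const_nhds.sub (Glimit hq0 hq1 hν x hx j)
    have := ge_of_tendsto' h2 h1
    linarith [this]
  have hbound : Gt q ν x j ≤ uu q ν j * (Complex.abs (Qf q ν x j) * Complex.abs (Rodd q ν x j)) := by
    rw [Gt]
    have h1 : (Qf q ν x j * (starRingEnd ℂ) (Rodd q ν x j)).im
        ≤ Complex.abs (Qf q ν x j) * Complex.abs (Rodd q ν x j) := by
      refine (le_abs_self _).trans ?_
      refine (Complex.abs_im_le_abs _).trans ?_
      rw [map_mul, Complex.abs_conj]
    have hu : (0:ℝ) ≤ uu q ν j := (Real.rpow_pos_of_pos hq0 _).le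
    exact mul_le_mul_of_nonneg_left h1 hu
  have hEsq : Complex.normSq (Rodd q ν x j) = Complex.abs (Rodd q ν x j) ^ 2 := Complex.normSq_eq_abs _
  have hDsq : Complex.normSq (Qf q ν x (j-1)) = Complex.abs (Qf q ν x (j-1)) ^ 2 := Complex.normSq_eq_abs _
  rw [hEsq, hDsq] at key
  rw [← mul_assoc] at hbound
  exact quadkey x.im (uu q ν j) (Complex.abs (Qf q ν x j)) (Complex.abs (Rodd q ν x j))
    (Complex.abs (Qf q ν x (j-1))) hxim (Real.rpow_pos_of_pos hq0 _)
    (Complex.abs.nonneg _) (Complex.abs.nonneg _) (Complex.abs.nonneg _)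
    (le_trans key hbound)
lemma abs_Qf (hq0 : 0 < q) (x : ℂ) (j : ℤ) :
    Complex.abs (Qf q ν x j) = rr q ν j * Complex.abs (Wf q ν x j) := by
  rw [Qf, map_mul, map_mul, Complex.abs_zpow, Complex.abs_ofReal,
    _root_.abs_of_pos (show (0:ℝ) < rr q ν j from Real.rpow_pos_of_pos hq0 _)]
  have h1 : Complex.abs (-1:ℂ) = 1 := by norm_num
  rw [h1, one_zpow, one_mul]

lemma Wf_conj (x : ℂ) (j : ℤ) :
    Complex.abs (Wf q ν ((starRingEnd ℂ) x) j) = Complex.abs (Wf q ν x j) := by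
  rw [Wf, Wf]
  have h : ((starRingEnd ℂ) x)^2 * ((q ^ (-(j:ℝ)) : ℝ) : ℂ)
      = (starRingEnd ℂ) (x^2 * ((q ^ (-(j:ℝ)) : ℝ) : ℂ)) := by
    rw [map_mul, map_pow, Complex.conj_ofReal]
  rw [h, Bf_conj, Complex.abs_conj]

lemma coreB_abs (hq0 : 0 < q) (hq1 : q < 1) (hν : -1 < ν) (x : ℂ) (hxim : x.im ≠ 0) (j : ℤ) :
    |x.im| * (rr q ν (j-1) * Complex.abs (Wf q ν x (j-1)))
      ≤ uu q ν j * (rr q ν j * Complex.abs (Wf q ν x j)) := by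
  rcases hxim.lt_or_gt with hneg | hpos
  · set y := (starRingEnd ℂ) x with hy
    have hyim : 0 < y.im := by rw [hy, Complex.conj_im]; linarith
    have h := coreB hq0 hq1 hν y hyim j
    rw [abs_Qf hq0, abs_Qf hq0, Wf_conj, Wf_conj] at h
    have : |x.im| = y.im := by rw [hy, Complex.conj_im, _root_.abs_of_neg hneg]
    rw [this]
    exact h
  · have h := coreB hq0 hq1 hν x hpos j
    rw [abs_Qf hq0, abs_Qf hq0] at h
    rw [_root_.abs_of_pos hpos]
    exact h

end HE

section Assembly
open HE

variable {c α β : ℝ} {n : ℕ}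

lemma JHE_eq (hν : -1 < ν) (q : ℝ) (z : ℂ) : JHE q ((ν : ℝ) : ℂ) z = Jser q ((ν : ℝ) : ℂ) z := by
  rw [JHE, dif_neg]
  rintro ⟨m, hm⟩
  have h : (ν : ℝ) = -((m : ℝ) + 1) := by
    have : ((-((m:ℝ)+1) : ℝ) : ℂ) = -((m:ℂ)+1) := by push_cast; ring
    exact_mod_cast hm.trans this.symm
  have : (0:ℝ) ≤ m := Nat.cast_nonneg m
  linarith

lemma Jser_eq {q ν : ℝ} (hq0 : 0 < q) (hq1 : q < 1) (hν : -1 < ν) (z : ℂ) :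
    Jser q ((ν : ℝ) : ℂ) z = z ^ ((ν : ℝ) : ℂ)
      * (qPochInf (q : ℂ) ((q : ℂ) ^ (((ν : ℝ) : ℂ) + 1)) / qPochInf (q : ℂ) (q : ℂ))
      * Bf q ν (z ^ 2) := by
  rw [Jser, Bf]
  congr 1
  apply tsum_congr
  intro m
  have hcast1 : (q:ℂ) ^ (((ν:ℝ):ℂ) + 1) = ((q ^ (ν+1) : ℝ):ℂ) := by
    rw [show ((ν:ℝ):ℂ) + 1 = (((ν+1):ℝ):ℂ) by push_cast; ring]
    exact (Complex.ofReal_cpow hq0.le (ν+1)).symm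
  have hp1 : qPoch (q:ℂ) (q:ℂ) m = ((∏ i ∈ Finset.range m, (1 - q * q ^ i) : ℝ) : ℂ) := by
    rw [qPoch, Complex.ofReal_prod]
    apply Finset.prod_congr rfl
    intros; push_cast; ring
  have hp2 : qPoch (q:ℂ) ((q:ℂ) ^ (((ν:ℝ):ℂ)+1)) m
      = ((∏ i ∈ Finset.range m, (1 - q ^ (ν+1) * q ^ i) : ℝ) : ℂ) := by
    rw [hcast1, qPoch, Complex.ofReal_prod]
    apply Finset.prod_congr rfl
    intros; push_cast; ring
  rw [hp1, hp2, aa, pow_mul]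
  push_cast
  ring

end Assembly

section Assembly2
open HE

lemma pHE_norm {c α β : ℝ} (hc0 : 0 < c) (hc1 : c < 1) (hα : 0 < α) (hβ : -1 < β)
    (n : ℕ) (hn : 1 ≤ n) (m : ℕ) (x : ℂ) (q ν : ℝ)
    (hqdef : q = c ^ ((1:ℝ)/(n:ℝ))) (hνdef : ν = 2*(n:ℝ)*α + β) :
    ‖pHE c α β m n x‖ = q ^ (-(m:ℝ)*(ν+1)/2)
      * ((Complex.abs x ^ ν)
        * Complex.abs (qPochInf (q:ℂ) ((q:ℂ) ^ (((ν:ℝ):ℂ)+1)) / qPochInf (q:ℂ) (q:ℂ)))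
      * Complex.abs (Bf q ν (x^2 * ((q ^ (-(m:ℝ)) : ℝ):ℂ))) := by
  have hn' : (0:ℝ) < (n:ℝ) := by
    have : (1:ℝ) ≤ (n:ℝ) := by exact_mod_cast hn
    linarith
  have hq0 : 0 < q := by rw [hqdef]; exact Real.rpow_pos_of_pos hc0 _
  have hq1 : q < 1 := by rw [hqdef]; exact Real.rpow_lt_one hc0.le hc1 (by positivity)
  have hν : -1 < ν := by
    have : (0:ℝ) < 2*(n:ℝ)*α := by positivity
    rw [hνdef]; linarith
  set σ : ℝ := c ^ (-(m:ℝ)/(2*(n:ℝ))) with hσ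
  have hσpos : 0 < σ := Real.rpow_pos_of_pos hc0 _
  have h1 : (c:ℂ) ^ (-(m:ℂ) / (2*(n:ℂ))) = ((σ:ℝ):ℂ) := by
    rw [show -(m:ℂ)/(2*(n:ℂ)) = ((-(m:ℝ)/(2*(n:ℝ)) : ℝ) : ℂ) by push_cast; ring]
    exact (Complex.ofReal_cpow hc0.le _).symm
  have hσq : σ = q ^ (-(m:ℝ)/2) := by
    rw [hσ, hqdef, ← Real.rpow_mul hc0.le]
    congr 1
    ring
  have hσ2 : σ^2 = q ^ (-(m:ℝ)) := by
    rw [hσq, sq, ← Real.rpow_add hq0]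
    congr 1; ring
  have harg : (x * ((σ:ℝ):ℂ))^2 = x^2 * ((q ^ (-(m:ℝ)) : ℝ):ℂ) := by
    rw [mul_pow, ← Complex.ofReal_pow, hσ2]
  have hνc : ((2 * (n:ℝ) * α + β : ℝ) : ℂ) = ((ν:ℝ):ℂ) := by rw [hνdef]
  rw [pHE, h1, show c ^ ((1:ℝ)/(n:ℝ)) = q from hqdef.symm, hνc, JHE_eq hν, Jser_eq hq0 hq1 hν, harg]
  rw [Complex.norm_eq_abs, map_mul, map_mul, map_mul, map_mul]
  have e1 : Complex.abs ((-1:ℂ)^m) = 1 := by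
    rw [map_pow]; norm_num
  have e2 : Complex.abs ((σ:ℝ):ℂ) = σ := by
    rw [Complex.abs_ofReal, _root_.abs_of_pos hσpos]
  have e3 : Complex.abs ((x * ((σ:ℝ):ℂ)) ^ (((ν:ℝ):ℂ))) = (Complex.abs x * σ) ^ ν := by
    rw [Complex.abs_cpow_real, map_mul, e2]
  rw [e1, e2, e3, one_mul]
  have e4 : Complex.abs x * σ = Complex.abs x * σ := rfl
  have e5 : (Complex.abs x * σ) ^ ν = Complex.abs x ^ ν * σ ^ ν :=
    Real.mul_rpow (Complex.abs.nonneg x) hσpos.le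
  have e6 : σ * σ ^ ν = q ^ (-(m:ℝ)*(ν+1)/2) := by
    nth_rewrite 1 [show σ = σ ^ (1:ℝ) from (Real.rpow_one σ).symm]
    rw [← Real.rpow_add hσpos, hσq, ← Real.rpow_mul hq0.le]
    congr 1; ring
  rw [e5, ← e6]
  ring

end Assembly2

/-- Lemma 4.2: the ratio estimate for the functions p_k(x;n). -/
theorem pHE_ratio_estimate (c α β : ℝ) (hc0 : 0 < c) (hc1 : c < 1)
    (hα : 0 < α) (hβ : -1 < β) :
    ∃ C : ℝ, 0 < C ∧ ∀ (k n : ℕ), 1 ≤ k → 1 ≤ n → ∀ x : ℂ, x.im ≠ 0 →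
      ‖pHE c α β (k - 1) n x‖ * |x.im| ≤ C * ‖pHE c α β k n x‖ := by
  refine ⟨1, one_pos, ?_⟩
  intro k n hk hn x hxim
  set q : ℝ := c ^ ((1:ℝ)/(n:ℝ)) with hqdef
  set ν : ℝ := 2*(n:ℝ)*α + β with hνdef
  have hn' : (0:ℝ) < (n:ℝ) := by
    have : (1:ℝ) ≤ (n:ℝ) := by exact_mod_cast hn
    linarith
  have hk' : (1:ℝ) ≤ (k:ℝ) := by exact_mod_cast hk
  have hq0 : 0 < q := Real.rpow_pos_of_pos hc0 _
  have hq1 : q < 1 := Real.rpow_lt_one hc0.le hc1 (by positivity)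
  have hν : -1 < ν := by
    have : (0:ℝ) < 2*(n:ℝ)*α := by positivity
    rw [hνdef]; linarith
  have hN1 := pHE_norm hc0 hc1 hα hβ n hn (k-1) x q ν hqdef hνdef
  have hN2 := pHE_norm hc0 hc1 hα hβ n hn k x q ν hqdef hνdef
  simp only [Nat.cast_sub hk, Nat.cast_one] at hN1
  have hcore := HE.coreB_abs hq0 hq1 hν x hxim (k:ℤ)
  simp only [HE.rr, HE.uu, HE.Wf] at hcore
  push_cast at hcore
  rw [hN1, hN2]
  set A : ℝ := Complex.abs x ^ ν
    * Complex.abs (qPochInf (q:ℂ) ((q:ℂ) ^ (((ν:ℝ):ℂ)+1)) / qPochInf (q:ℂ) (q:ℂ)) with hA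
  have hA0 : 0 ≤ A := by
    apply mul_nonneg (Real.rpow_nonneg (Complex.abs.nonneg x) ν) (Complex.abs.nonneg _)
  set N1 : ℝ := Complex.abs (HE.Bf q ν (x^2 * ((q ^ (-((k:ℝ)-1)) : ℝ):ℂ))) with hN1d
  set N2 : ℝ := Complex.abs (HE.Bf q ν (x^2 * ((q ^ (-(k:ℝ)) : ℝ):ℂ))) with hN2d
  have huu1 : q ^ (((k:ℝ)+ν)/2) ≤ 1 :=
    Real.rpow_le_one hq0.le hq1.le (by linarith)
  have hcore' : |x.im| * (q ^ (-((k:ℝ)-1)*(ν+1)/2) * N1)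
      ≤ q ^ (((k:ℝ)+ν)/2) * (q ^ (-(k:ℝ)*(ν+1)/2) * N2) := hcore
  have hpos2 : (0:ℝ) ≤ q ^ (-(k:ℝ)*(ν+1)/2) * N2 := by
    apply mul_nonneg (Real.rpow_pos_of_pos hq0 _).le (Complex.abs.nonneg _)
  calc q ^ (-((k:ℝ)-1)*(ν+1)/2) * A * N1 * |x.im|
      = A * (|x.im| * (q ^ (-((k:ℝ)-1)*(ν+1)/2) * N1)) := by ring
    _ ≤ A * (q ^ (((k:ℝ)+ν)/2) * (q ^ (-(k:ℝ)*(ν+1)/2) * N2)) :=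
        mul_le_mul_of_nonneg_left hcore' hA0
    _ ≤ A * (1 * (q ^ (-(k:ℝ)*(ν+1)/2) * N2)) := by
        apply mul_le_mul_of_nonneg_left (mul_le_mul_of_nonneg_right huu1 hpos2) hA0
    _ = 1 * (q ^ (-(k:ℝ)*(ν+1)/2) * A * N2) := by ring
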